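/- Let e = (e_1, ..., e_n) be a vector of positive integers and let N_+(e), N_-(e) denote the number of even and odd entries of e respectively. If N_-(e) - N_+(e) ∉ {0, 1}, then f_n(e) = ∫_{Δ_n} det(x_i^{e_j-1}) dx = 0. -/

import Mathlib

open Finset MeasureTheory

/-- `f_n(e) = ∫_{Δ_n} det(x_i^{e_j - 1}) dx` where `Δ_n = {1 ≥ x_1 ≥ ... ≥ x_n ≥ -1}`. -/
noncomputable def fint (n : ℕ) (e : Fin n → ℕ) : ℝ :=
  ∫ x in {x : Fin n → ℝ | (∀ i, -1 ≤ x i ∧ x i ≤ 1) ∧ ∀ i j : Fin n, i ≤ j → x j ≤ x i},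
    Matrix.det (Matrix.of fun i j => x i ^ (e j - 1))

namespace Stmt6

variable {n : ℕ}

def Box (n : ℕ) : Set (Fin n → ℝ) := {x | ∀ i, -1 ≤ x i ∧ x i ≤ 1}

def Adec (σ : Equiv.Perm (Fin n)) : Set (Fin n → ℝ) :=
  {x | ∀ i j : Fin n, i < j → x (σ j) < x (σ i)}

def Babs (τ : Equiv.Perm (Fin n)) : Set (Fin n → ℝ) :=
  {x | ∀ i j : Fin n, i < j → |x (τ j)| < |x (τ i)|}

noncomputable def W (x : Fin n → ℝ) : ℝ :=
  ∏ i : Fin n, ∏ j ∈ Finset.Ioi i, Real.sign (x i - x j)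

noncomputable def T (e : Fin n → ℕ) (x : Fin n → ℝ) : ℝ :=
  Matrix.det (Matrix.of fun i j => x i ^ (e j - 1))

lemma sign_mul (a b : ℝ) : Real.sign (a * b) = Real.sign a * Real.sign b := by
  rcases lt_trichotomy a 0 with ha | ha | ha
  · rcases lt_trichotomy b 0 with hb | hb | hb
    · rw [Real.sign_of_pos (mul_pos_of_neg_of_neg ha hb), Real.sign_of_neg ha,
        Real.sign_of_neg hb]; ring
    · subst hb; simp
    · rw [Real.sign_of_neg (mul_neg_of_neg_of_pos ha hb), Real.sign_of_neg ha,
        Real.sign_of_pos hb]; ring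
  · subst ha; simp
  · rcases lt_trichotomy b 0 with hb | hb | hb
    · rw [Real.sign_of_neg (mul_neg_of_pos_of_neg ha hb), Real.sign_of_pos ha,
        Real.sign_of_neg hb]; ring
    · subst hb; simp
    · rw [Real.sign_of_pos (mul_pos ha hb), Real.sign_of_pos ha, Real.sign_of_pos hb]; ring

noncomputable def signHom : ℝ →* ℝ where
  toFun := Real.sign
  map_one' := Real.sign_one
  map_mul' := sign_mul

lemma sign_add_of_abs_lt {a b : ℝ} (h : |b| < |a|) : Real.sign (a + b) = Real.sign a := by
  rcases lt_trichotomy a 0 with ha | ha | ha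
  · have h2 : |a| = -a := abs_of_neg ha
    have h3 := (abs_lt.mp h).2
    rw [h2] at h3
    rw [Real.sign_of_neg ha, Real.sign_of_neg (by linarith)]
  · subst ha; simp at h; exact absurd h (not_lt.mpr (abs_nonneg b))
  · have h2 : |a| = a := abs_of_pos ha
    have h3 := (abs_lt.mp h).1
    rw [h2] at h3
    rw [Real.sign_of_pos ha, Real.sign_of_pos (by linarith)]

lemma measurable_sign : Measurable Real.sign := by
  have : Real.sign = fun r : ℝ => if r < 0 then (-1 : ℝ) else if 0 < r then 1 else 0 :=
    funext fun r => rfl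
  rw [this]
  exact Measurable.ite measurableSet_Iio measurable_const
    (Measurable.ite measurableSet_Ioi measurable_const measurable_const)

lemma W_eq (x : Fin n → ℝ) :
    W x = Real.sign (∏ i : Fin n, ∏ j ∈ Finset.Ioi i, (x i - x j)) := by
  rw [show (Real.sign (∏ i : Fin n, ∏ j ∈ Finset.Ioi i, (x i - x j)))
      = signHom (∏ i : Fin n, ∏ j ∈ Finset.Ioi i, (x i - x j)) from rfl, map_prod]
  exact Finset.prod_congr rfl fun i _ => (map_prod signHom _ _).symm

lemma U_eq (y : Fin n → ℝ) :
    ∏ i : Fin n, ∏ j ∈ Finset.Ioi i, (y i - y j)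
      = (∏ i : Fin n, ∏ j ∈ Finset.Ioi i, (-1 : ℝ)) * (Matrix.vandermonde y).det := by
  rw [Matrix.det_vandermonde, ← Finset.prod_mul_distrib]
  refine Finset.prod_congr rfl fun i _ => ?_
  rw [← Finset.prod_mul_distrib]
  exact Finset.prod_congr rfl fun j _ => by ring

lemma U_perm (x : Fin n → ℝ) (π : Equiv.Perm (Fin n)) :
    ∏ i : Fin n, ∏ j ∈ Finset.Ioi i, (x (π i) - x (π j))
      = ((Equiv.Perm.sign π : ℤ) : ℝ) * ∏ i : Fin n, ∏ j ∈ Finset.Ioi i, (x i - x j) := by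
  have hv : Matrix.vandermonde (fun i => x (π i)) = (Matrix.vandermonde x).submatrix π id := rfl
  rw [U_eq (fun i => x (π i)), U_eq x, hv, Matrix.det_permute]
  push_cast
  ring

lemma sign_units_cast (u : ℤˣ) : Real.sign ((u : ℤ) : ℝ) = ((u : ℤ) : ℝ) := by
  rcases Int.units_eq_one_or u with h | h <;> rw [h]
  · simp [Real.sign_one]
  · push_cast
    rw [show ((-1 : ℝ)) = -(1 : ℝ) from rfl, Real.sign_neg, Real.sign_one]

lemma W_perm (x : Fin n → ℝ) (π : Equiv.Perm (Fin n)) :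
    W (fun i => x (π i)) = ((Equiv.Perm.sign π : ℤ) : ℝ) * W x := by
  rw [W_eq, W_eq, U_perm, sign_mul, sign_units_cast]

lemma T_perm (e : Fin n → ℕ) (x : Fin n → ℝ) (π : Equiv.Perm (Fin n)) :
    T e (fun i => x (π i)) = ((Equiv.Perm.sign π : ℤ) : ℝ) * T e x := by
  have hm : (Matrix.of fun i j => x (π i) ^ (e j - 1))
      = (Matrix.of fun i j => x i ^ (e j - 1)).submatrix π id := rfl
  rw [T, T, hm, Matrix.det_permute]

lemma measurable_W : Measurable (W (n := n)) := by
  apply Finset.measurable_prod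
  intro i _
  apply Finset.measurable_prod
  intro j _
  exact measurable_sign.comp ((measurable_pi_apply i).sub (measurable_pi_apply j))

lemma abs_sign_le (t : ℝ) : |Real.sign t| ≤ 1 := by
  rcases Real.sign_apply_eq t with h | h | h <;> rw [h] <;> norm_num

lemma abs_W_le (x : Fin n → ℝ) : |W x| ≤ 1 := by
  rw [W]
  calc |∏ i : Fin n, ∏ j ∈ Finset.Ioi i, Real.sign (x i - x j)|
      = ∏ i : Fin n, |∏ j ∈ Finset.Ioi i, Real.sign (x i - x j)| := Finset.abs_prod _ _
    _ ≤ 1 := by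
        apply Finset.prod_le_one (fun i _ => abs_nonneg _)
        intro i _
        calc |∏ j ∈ Finset.Ioi i, Real.sign (x i - x j)|
            = ∏ j ∈ Finset.Ioi i, |Real.sign (x i - x j)| := Finset.abs_prod _ _
          _ ≤ 1 := Finset.prod_le_one (fun j _ => abs_nonneg _) (fun j _ => abs_sign_le _)

lemma continuous_T (e : Fin n → ℕ) : Continuous (T e) := by
  unfold T
  exact Continuous.matrix_det (continuous_matrix fun i j => (continuous_apply i).pow _)

lemma measurableSet_Box : MeasurableSet (Box n) := by
  have : Box n = ⋂ i : Fin n, ((fun x : Fin n → ℝ => x i) ⁻¹' Set.Icc (-1) 1) := by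
    ext x; simp [Box, Set.mem_Icc]
  rw [this]
  exact MeasurableSet.iInter fun i => (measurable_pi_apply i) measurableSet_Icc

lemma measurableSet_Adec (σ : Equiv.Perm (Fin n)) : MeasurableSet (Adec σ) := by
  have : Adec σ = ⋂ i : Fin n, ⋂ j : Fin n, ⋂ (_ : i < j), {x : Fin n → ℝ | x (σ j) < x (σ i)} := by
    ext x; simp [Adec]
  rw [this]
  exact MeasurableSet.iInter fun i => MeasurableSet.iInter fun j => MeasurableSet.iInter
    fun _ => measurableSet_lt (measurable_pi_apply _) (measurable_pi_apply _)

lemma measurableSet_Babs (τ : Equiv.Perm (Fin n)) : MeasurableSet (Babs τ) := by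
  have : Babs τ = ⋂ i : Fin n, ⋂ j : Fin n, ⋂ (_ : i < j),
      {x : Fin n → ℝ | |x (τ j)| < |x (τ i)|} := by
    ext x; simp [Babs]
  rw [this]
  exact MeasurableSet.iInter fun i => MeasurableSet.iInter fun j => MeasurableSet.iInter
    fun _ => measurableSet_lt (measurable_pi_apply _).abs (measurable_pi_apply _).abs

lemma isCompact_Box : IsCompact (Box n) := by
  have : Box n = Set.pi Set.univ (fun _ : Fin n => Set.Icc (-1 : ℝ) 1) := by
    ext x; simp [Box, Set.mem_univ_pi, Set.mem_Icc, Pi.le_def, forall_and]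
  rw [this]
  exact isCompact_univ_pi fun i => isCompact_Icc

lemma integrableOn_W_mul (f : (Fin n → ℝ) → ℝ) (hf : Continuous f)
    {s : Set (Fin n → ℝ)} (hs : s ⊆ Box n) :
    IntegrableOn (fun x => W x * f x) s volume := by
  have h1 : IntegrableOn f (Box n) volume :=
    hf.continuousOn.integrableOn_compact isCompact_Box
  have h2 : IntegrableOn (fun x => W x * f x) (Box n) volume := by
    apply Integrable.bdd_mul (c := 1) h1 (measurable_W.aestronglyMeasurable.restrict)
    exact Filter.Eventually.of_forall (fun x => by simpa using abs_W_le x)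
  exact h2.mono_set hs

lemma null_lin (i j : Fin n) (hij : i ≠ j) (s : ℝ) :
    volume {x : Fin n → ℝ | x i = s * x j} = 0 := by
  set φ : (Fin n → ℝ) →ₗ[ℝ] ℝ :=
    LinearMap.proj i - s • LinearMap.proj j with hφ
  have hker : {x : Fin n → ℝ | x i = s * x j} = (LinearMap.ker φ : Set (Fin n → ℝ)) := by
    ext x
    simp only [Set.mem_setOf_eq, SetLike.mem_coe, LinearMap.mem_ker, hφ,
      LinearMap.sub_apply, LinearMap.smul_apply, LinearMap.proj_apply, smul_eq_mul]
    constructor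
    · intro h; rw [h]; ring
    · intro h; linarith [h]
  have hne : LinearMap.ker φ ≠ ⊤ := by
    intro htop
    have h1 : (Pi.single i 1 : Fin n → ℝ) ∈ LinearMap.ker φ := by rw [htop]; trivial
    rw [LinearMap.mem_ker, hφ] at h1
    simp only [LinearMap.sub_apply, LinearMap.smul_apply, LinearMap.proj_apply,
      smul_eq_mul] at h1
    rw [Pi.single_eq_same, Pi.single_eq_of_ne hij.symm] at h1
    simp at h1
  rw [hker]
  exact Measure.addHaar_submodule volume (LinearMap.ker φ) hne

lemma ae_inj :
    ∀ᵐ x : Fin n → ℝ, ∀ i j : Fin n, i ≠ j → x i ≠ x j := by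
  rw [MeasureTheory.ae_iff]
  refine measure_mono_null (fun x hx => ?_)
    (measure_iUnion_null (s := fun i : Fin n => ⋃ j : Fin n, ⋃ (_ : i ≠ j),
      {x : Fin n → ℝ | x i = 1 * x j})
      fun i => measure_iUnion_null fun j => measure_iUnion_null fun hij => null_lin i j hij 1)
  simp only [Set.mem_setOf_eq] at hx
  push_neg at hx
  obtain ⟨i, j, hij, hxij⟩ := hx
  exact Set.mem_iUnion.mpr ⟨i, Set.mem_iUnion.mpr ⟨j, Set.mem_iUnion.mpr ⟨hij, by simpa using hxij⟩⟩⟩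

lemma ae_abs_inj :
    ∀ᵐ x : Fin n → ℝ, ∀ i j : Fin n, i ≠ j → |x i| ≠ |x j| := by
  rw [MeasureTheory.ae_iff]
  refine measure_mono_null (fun x hx => ?_)
    (measure_iUnion_null (s := fun i : Fin n => ⋃ j : Fin n, ⋃ (_ : i ≠ j),
      ({x : Fin n → ℝ | x i = 1 * x j} ∪ {x : Fin n → ℝ | x i = (-1) * x j}))
      fun i => measure_iUnion_null fun j => measure_iUnion_null fun hij =>
        measure_union_null (null_lin i j hij 1) (null_lin i j hij (-1)))
  simp only [Set.mem_setOf_eq] at hx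
  push_neg at hx
  obtain ⟨i, j, hij, hxij⟩ := hx
  rcases abs_eq_abs.mp hxij with h | h
  · exact Set.mem_iUnion.mpr ⟨i, Set.mem_iUnion.mpr ⟨j, Set.mem_iUnion.mpr
      ⟨hij, Or.inl (by simpa using h)⟩⟩⟩
  · exact Set.mem_iUnion.mpr ⟨i, Set.mem_iUnion.mpr ⟨j, Set.mem_iUnion.mpr
      ⟨hij, Or.inr (by simpa [neg_mul] using h)⟩⟩⟩

lemma exists_unique_sort (v : Fin n → ℝ) (hv : ∀ i j : Fin n, i ≠ j → v i ≠ v j) :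
    ∃! σ : Equiv.Perm (Fin n), ∀ i j : Fin n, i < j → v (σ j) < v (σ i) := by
  have hvinj : Function.Injective v := by
    intro a b hab
    by_contra hne
    exact hv a b hne hab
  have hexists : ∃ σ : Equiv.Perm (Fin n), ∀ i j : Fin n, i < j → v (σ j) < v (σ i) := by
    set σ := Tuple.sort (fun i => -(v i)) with hσ
    have hmono : Monotone ((fun i => -(v i)) ∘ σ) := Tuple.monotone_sort _
    have hinj : Function.Injective ((fun i => -(v i)) ∘ σ) :=
      (neg_injective.comp hvinj).comp σ.injective
    have hsm : StrictMono ((fun i => -(v i)) ∘ σ) := hmono.strictMono_of_injective hinj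
    exact ⟨σ, fun i j hij => by have := hsm hij; simpa [neg_lt_neg_iff] using this⟩
  obtain ⟨σ, hσ⟩ := hexists
  refine ⟨σ, hσ, ?_⟩
  intro σ' hσ'
  have hsm1 : StrictMono (fun i => -(v (σ i))) := fun i j hij => by
    simpa [neg_lt_neg_iff] using hσ i j hij
  have hsm2 : StrictMono (fun i => -(v (σ' i))) := fun i j hij => by
    simpa [neg_lt_neg_iff] using hσ' i j hij
  have hrange : Set.range (fun i => -(v (σ' i))) = Set.range (fun i => -(v (σ i))) := by
    have h1 : Set.range (fun i => -(v (σ' i))) = Set.range (fun i => -(v i)) :=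
      Function.Surjective.range_comp σ'.surjective (fun i => -(v i))
    have h2 : Set.range (fun i => -(v (σ i))) = Set.range (fun i => -(v i)) :=
      Function.Surjective.range_comp σ.surjective (fun i => -(v i))
    rw [h1, h2]
  have inst : WellFoundedLT (Fin n) := inferInstance
  have := (hsm2.range_inj hsm1).mp hrange
  ext i
  have hi := congrFun this i
  simp only [neg_inj] at hi
  exact congrArg _ (hvinj hi)

lemma partition_integral (f : (Fin n → ℝ) → ℝ) (hf : IntegrableOn f (Box n) volume)
    (S : Equiv.Perm (Fin n) → Set (Fin n → ℝ)) (hS : ∀ σ, MeasurableSet (S σ))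
    (hae : ∀ᵐ x : Fin n → ℝ, x ∈ Box n → ∃! σ : Equiv.Perm (Fin n), x ∈ S σ) :
    ∫ x in Box n, f x = ∑ σ : Equiv.Perm (Fin n), ∫ x in Box n ∩ S σ, f x := by
  classical
  have hmB : MeasurableSet (Box n) := measurableSet_Box
  have hint : ∀ σ : Equiv.Perm (Fin n),
      Integrable ((Box n ∩ S σ).indicator f) volume := fun σ =>
    (hf.mono_set Set.inter_subset_left).integrable_indicator (hmB.inter (hS σ))
  have h2 : (Box n).indicator f =ᵐ[volume]
      fun x => ∑ σ : Equiv.Perm (Fin n), (Box n ∩ S σ).indicator f x := by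
    filter_upwards [hae] with x hx
    by_cases hxB : x ∈ Box n
    · obtain ⟨σ0, hσ0, huniq⟩ := hx hxB
      rw [Set.indicator_of_mem hxB, Finset.sum_eq_single σ0]
      · rw [Set.indicator_of_mem (Set.mem_inter hxB hσ0)]
      · intro σ _ hne
        exact Set.indicator_of_notMem (fun hmem => hne (huniq σ hmem.2)) _
      · intro hm; exact absurd (Finset.mem_univ σ0) hm
    · rw [Set.indicator_of_notMem hxB]
      symm
      apply Finset.sum_eq_zero
      intro σ _
      exact Set.indicator_of_notMem (fun hmem => hxB hmem.1) _
  calc ∫ x in Box n, f x = ∫ x, (Box n).indicator f x := (integral_indicator hmB).symm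
    _ = ∫ x, ∑ σ : Equiv.Perm (Fin n), (Box n ∩ S σ).indicator f x := integral_congr_ae h2
    _ = ∑ σ : Equiv.Perm (Fin n), ∫ x, (Box n ∩ S σ).indicator f x :=
        integral_finset_sum _ (fun σ _ => hint σ)
    _ = ∑ σ : Equiv.Perm (Fin n), ∫ x in Box n ∩ S σ, f x :=
        Finset.sum_congr rfl fun σ _ => integral_indicator (hmB.inter (hS σ))

lemma piCongr_apply (σ : Equiv.Perm (Fin n)) (x : Fin n → ℝ) :
    (MeasurableEquiv.piCongrLeft (fun _ : Fin n => ℝ) σ) x = fun i => x (σ.symm i) := by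
  funext i
  conv_lhs => rw [← Equiv.apply_symm_apply σ i]
  rw [MeasurableEquiv.coe_piCongrLeft]
  exact Equiv.piCongrLeft_apply_apply (fun _ : Fin n => ℝ) σ x (σ.symm i)

lemma region_Adec (e : Fin n → ℕ) (σ : Equiv.Perm (Fin n)) :
    ∫ x in Box n ∩ Adec σ, W x * T e x
      = ∫ x in Box n ∩ Adec (1 : Equiv.Perm (Fin n)), W x * T e x := by
  have hmp := volume_measurePreserving_piCongrLeft (fun _ : Fin n => ℝ) σ
  set Φ := MeasurableEquiv.piCongrLeft (fun _ : Fin n => ℝ) σ with hΦdef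
  have hpre : ⇑Φ ⁻¹' (Box n ∩ Adec σ) = Box n ∩ Adec (1 : Equiv.Perm (Fin n)) := by
    ext x
    simp only [Set.mem_preimage, hΦdef, piCongr_apply, Set.mem_inter_iff, Box, Adec,
      Set.mem_setOf_eq, Equiv.Perm.coe_one, id_eq]
    constructor
    · rintro ⟨hB, hA⟩
      refine ⟨fun i => by simpa using hB (σ i), fun i j hij => by simpa using hA i j hij⟩
    · rintro ⟨hB, hA⟩
      exact ⟨fun i => hB (σ.symm i), fun i j hij => by simpa using hA i j hij⟩
  have key := hmp.setIntegral_preimage_emb Φ.measurableEmbedding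
    (fun x => W x * T e x) (Box n ∩ Adec σ)
  rw [hpre] at key
  rw [← key]
  apply setIntegral_congr_fun (measurableSet_Box.inter (measurableSet_Adec 1))
  intro y _
  show W (Φ y) * T e (Φ y) = W y * T e y
  rw [piCongr_apply]
  rw [show (fun i => y (σ.symm i)) = (fun i => y (σ.symm i)) from rfl]
  rw [W_perm y σ.symm, T_perm e y σ.symm]
  rcases Int.units_eq_one_or (Equiv.Perm.sign σ.symm) with h | h <;> rw [h] <;> push_cast <;> ring

lemma region_Babs (e : Fin n → ℕ) (σ : Equiv.Perm (Fin n)) :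
    ∫ x in Box n ∩ Babs σ, W x * T e x
      = ∫ x in Box n ∩ Babs (1 : Equiv.Perm (Fin n)), W x * T e x := by
  have hmp := volume_measurePreserving_piCongrLeft (fun _ : Fin n => ℝ) σ
  set Φ := MeasurableEquiv.piCongrLeft (fun _ : Fin n => ℝ) σ with hΦdef
  have hpre : ⇑Φ ⁻¹' (Box n ∩ Babs σ) = Box n ∩ Babs (1 : Equiv.Perm (Fin n)) := by
    ext x
    simp only [Set.mem_preimage, hΦdef, piCongr_apply, Set.mem_inter_iff, Box, Babs,
      Set.mem_setOf_eq, Equiv.Perm.coe_one, id_eq]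
    constructor
    · rintro ⟨hB, hA⟩
      refine ⟨fun i => by simpa using hB (σ i), fun i j hij => by simpa using hA i j hij⟩
    · rintro ⟨hB, hA⟩
      exact ⟨fun i => hB (σ.symm i), fun i j hij => by simpa using hA i j hij⟩
  have key := hmp.setIntegral_preimage_emb Φ.measurableEmbedding
    (fun x => W x * T e x) (Box n ∩ Babs σ)
  rw [hpre] at key
  rw [← key]
  apply setIntegral_congr_fun (measurableSet_Box.inter (measurableSet_Babs 1))
  intro y _
  show W (Φ y) * T e (Φ y) = W y * T e y
  rw [piCongr_apply]
  rw [W_perm y σ.symm, T_perm e y σ.symm]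
  rcases Int.units_eq_one_or (Equiv.Perm.sign σ.symm) with h | h <;> rw [h] <;> push_cast <;> ring

lemma card_range_even (m : ℕ) :
    ((Finset.range m).filter (fun k => Even k)).card = (m + 1) / 2 := by
  induction m with
  | zero => simp
  | succ m ih =>
    rw [Finset.range_add_one, Finset.filter_insert]
    by_cases hm : Even m
    · rw [if_pos hm, Finset.card_insert_of_notMem (by simp), ih]
      obtain ⟨k, hk⟩ := hm
      omega
    · rw [if_neg hm, ih]
      rw [Nat.not_even_iff_odd] at hm
      obtain ⟨k, hk⟩ := hm
      omega

lemma card_fin_even : (Finset.univ.filter (fun r : Fin n => Even (r : ℕ))).card = (n + 1) / 2 := by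
  rw [← card_range_even n]
  apply Finset.card_nbij (fun r : Fin n => (r : ℕ))
  · intro a ha
    simp only [Finset.mem_coe, Finset.mem_filter, Finset.mem_univ, true_and] at ha
    simp only [Finset.mem_coe, Finset.mem_filter, Finset.mem_range]
    exact ⟨a.isLt, ha⟩
  · intro a _ b _ hab
    exact Fin.ext hab
  · intro k hk
    simp only [Finset.coe_filter, Finset.mem_range, Set.mem_setOf_eq] at hk
    exact ⟨⟨k, hk.1⟩, by simp [hk.2], rfl⟩

lemma card_fin_even_rev :
    (Finset.univ.filter (fun r : Fin n => Even (n - 1 - (r : ℕ)))).card = (n + 1) / 2 := by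
  rw [← card_fin_even]
  apply Finset.card_nbij (fun r : Fin n => r.rev)
  · intro a ha
    simp only [Finset.mem_coe, Finset.mem_filter, Finset.mem_univ, true_and] at ha ⊢
    rwa [Fin.val_rev, show n - (a + 1) = n - 1 - (a : ℕ) by omega]
  · intro a _ b _ hab
    exact Fin.rev_injective hab
  · intro k hk
    simp only [Finset.coe_filter, Finset.mem_univ, true_and, Set.mem_setOf_eq] at hk
    refine ⟨k.rev, ?_, Fin.rev_rev k⟩
    simp only [Finset.coe_filter, Set.mem_setOf_eq, Finset.mem_univ, true_and, Fin.val_rev]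
    rwa [show n - 1 - (n - ((k : ℕ) + 1)) = (k : ℕ) by omega]

lemma card_filter_comp (p : Fin n → Prop) [DecidablePred p] (π : Equiv.Perm (Fin n)) :
    (Finset.univ.filter (fun i => p (π i))).card = (Finset.univ.filter p).card := by
  apply Finset.card_nbij (fun i => π i)
  · intro a ha
    simp only [Finset.mem_coe, Finset.mem_filter, Finset.mem_univ, true_and] at ha ⊢
    exact ha
  · intro a _ b _ hab
    exact π.injective hab
  · intro k hk
    simp only [Finset.coe_filter, Finset.mem_univ, true_and, Set.mem_setOf_eq] at hk
    exact ⟨π.symm k, by simp [hk], by simp⟩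

lemma W_one_on_Adec {x : Fin n → ℝ} (hx : x ∈ Adec (1 : Equiv.Perm (Fin n))) : W x = 1 := by
  rw [W]
  apply Finset.prod_eq_one
  intro i _
  apply Finset.prod_eq_one
  intro j hj
  have hij : i < j := Finset.mem_Ioi.mp hj
  have := hx i j hij
  simp only [Equiv.Perm.coe_one, id_eq] at this
  exact Real.sign_of_pos (by linarith)

lemma mono_vanish (b : Fin n → ℕ)
    (hcard : (Finset.univ.filter (fun i : Fin n => Even (b i))).card ≠ (n + 1) / 2) :
    ∫ x in Box n ∩ Babs (1 : Equiv.Perm (Fin n)), W x * ∏ i, x i ^ (b i) = 0 := by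
  classical
  -- find a coordinate with odd total parity
  have hex : ∃ r : Fin n, ¬ Even (b r + (n - 1 - (r : ℕ))) := by
    by_contra hc
    push_neg at hc
    apply hcard
    have heq : (Finset.univ.filter (fun i : Fin n => Even (b i)))
        = (Finset.univ.filter (fun i : Fin n => Even (n - 1 - (i : ℕ)))) := by
      apply Finset.filter_congr
      intro i _
      have := Nat.even_add.mp (hc i)
      tauto
    rw [heq]
    exact card_fin_even_rev
  obtain ⟨r, hr⟩ := hex
  set D := Box n ∩ Babs (1 : Equiv.Perm (Fin n)) with hDdef
  have hDm : MeasurableSet D := measurableSet_Box.inter (measurableSet_Babs 1)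
  set ρ : (Fin n → ℝ) → (Fin n → ℝ) :=
    fun x i => (fun t : ℝ => if i = r then -t else t) (x i) with hρdef
  have hρρ : ∀ x, ρ (ρ x) = x := by
    intro x; funext i; by_cases hi : i = r <;> simp [hρdef, hi]
  have hρmeas : Measurable ρ := by
    apply measurable_pi_lambda
    intro i
    by_cases hi : i = r
    · have hfun : (fun x : Fin n → ℝ => (fun t : ℝ => if i = r then -t else t) (x i))
          = fun x : Fin n → ℝ => -(x i) := funext fun x => if_pos hi
      rw [hρdef]
      simp only []
      rw [hfun]
      exact (measurable_pi_apply i).neg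
    · have hfun : (fun x : Fin n → ℝ => (fun t : ℝ => if i = r then -t else t) (x i))
          = fun x : Fin n → ℝ => x i := funext fun x => if_neg hi
      rw [hρdef]
      simp only []
      rw [hfun]
      exact measurable_pi_apply i
  have hmp : MeasurePreserving ρ volume volume := by
    apply volume_preserving_pi (f := fun (i : Fin n) (t : ℝ) => if i = r then -t else t)
    intro i
    by_cases hi : i = r
    · have hfun : (fun t : ℝ => if i = r then -t else t) = fun t : ℝ => -t :=
        funext fun t => if_pos hi
      rw [hfun]
      exact Measure.measurePreserving_neg _
    · have hfun : (fun t : ℝ => if i = r then -t else t) = fun t : ℝ => t :=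
        funext fun t => if_neg hi
      rw [hfun]
      exact MeasurePreserving.id _
  have hemb : MeasurableEmbedding ρ :=
    (MeasurableEquiv.mk ⟨ρ, ρ, hρρ, hρρ⟩ hρmeas hρmeas).measurableEmbedding
  have habsρ : ∀ (x : Fin n → ℝ) (i : Fin n), |ρ x i| = |x i| := by
    intro x i; by_cases hi : i = r <;> simp [hρdef, hi]
  have hpre : ρ ⁻¹' D = D := by
    ext x
    simp only [Set.mem_preimage, hDdef, Set.mem_inter_iff, Box, Babs, Set.mem_setOf_eq,
      Equiv.Perm.coe_one, id_eq]
    constructor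
    · rintro ⟨hB, hA⟩
      constructor
      · intro i
        have := hB i
        by_cases hi : i = r
        · subst hi; simp only [hρdef, if_pos rfl] at this; constructor <;> linarith [this.1, this.2]
        · simpa [hρdef, hi] using this
      · intro i j hij
        have := hA i j hij
        rwa [habsρ, habsρ] at this
    · rintro ⟨hB, hA⟩
      constructor
      · intro i
        have := hB i
        by_cases hi : i = r
        · subst hi; simp only [hρdef, if_pos rfl]; constructor <;> linarith [this.1, this.2]
        · simpa [hρdef, hi] using this
      · intro i j hij
        rw [habsρ, habsρ]
        exact hA i j hij
  have hodd : ∀ x ∈ D, W (ρ x) * ∏ i, (ρ x) i ^ (b i) = -(W x * ∏ i, x i ^ (b i)) := by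
    intro x hx
    have habs : ∀ i j : Fin n, i < j → |x j| < |x i| := by
      intro i j hij
      have := hx.2 i j hij
      simpa using this
    have hW : W (ρ x) = (-1 : ℝ) ^ (n - 1 - (r : ℕ)) * W x := by
      rw [W, W]
      have hfac : ∀ i : Fin n, ∀ j ∈ Finset.Ioi i,
          Real.sign (ρ x i - ρ x j)
            = (if i = r then (-1 : ℝ) else 1) * Real.sign (x i - x j) := by
        intro i j hj
        have hij : i < j := Finset.mem_Ioi.mp hj
        have habsij := habs i j hij
        by_cases hi : i = r
        · subst hi
          have hjr : ¬ (j = i) := by intro h; exact absurd h (ne_of_gt hij)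
          simp only [hρdef, if_pos rfl, if_neg hjr, if_pos]
          have h1 : Real.sign (-(x i) + -(x j)) = Real.sign (-(x i)) :=
            sign_add_of_abs_lt (by rw [abs_neg, abs_neg]; exact habsij)
          have h2 : Real.sign (x i + -(x j)) = Real.sign (x i) :=
            sign_add_of_abs_lt (by rw [abs_neg]; exact habsij)
          rw [sub_eq_add_neg, sub_eq_add_neg, h1, h2, Real.sign_neg]
          ring
        · by_cases hjr : j = r
          · subst hjr
            simp only [hρdef, if_neg hi, if_pos rfl]
            have h1 : Real.sign (x i + x j) = Real.sign (x i) := sign_add_of_abs_lt habsij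
            have h2 : Real.sign (x i + -(x j)) = Real.sign (x i) :=
              sign_add_of_abs_lt (by rw [abs_neg]; exact habsij)
            rw [sub_neg_eq_add, h1, sub_eq_add_neg, h2]
            ring
          · simp only [hρdef, if_neg hi, if_neg hjr]
            ring_nf
      rw [Finset.prod_congr rfl (fun i _ => Finset.prod_congr rfl (fun j hj => hfac i j hj))]
      simp only [Finset.prod_mul_distrib]
      have hconst : ∀ i : Fin n, ∏ _j ∈ Finset.Ioi i, (if i = r then (-1 : ℝ) else 1)
          = (if i = r then (-1 : ℝ) ^ (n - 1 - (i : ℕ)) else 1) := by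
        intro i
        by_cases hi : i = r <;> simp [hi, Finset.prod_const, Fin.card_Ioi]
      rw [Finset.prod_congr rfl (fun i _ => hconst i), Finset.prod_ite_eq' Finset.univ r
        (fun i => (-1 : ℝ) ^ (n - 1 - (i : ℕ)))]
      simp
    have hM : ∏ i, (ρ x) i ^ (b i) = (-1 : ℝ) ^ (b r) * ∏ i, x i ^ (b i) := by
      have : ∀ i : Fin n, (ρ x) i ^ (b i)
          = (if i = r then (-1 : ℝ) ^ (b i) else 1) * x i ^ (b i) := by
        intro i
        by_cases hi : i = r
        · subst hi
          show (if i = i then -(x i) else x i) ^ (b i) = _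
          rw [if_pos rfl, neg_pow, if_pos rfl]
        · show (if i = r then -(x i) else x i) ^ (b i)
              = (if i = r then (-1 : ℝ) ^ (b i) else 1) * x i ^ (b i)
          rw [if_neg hi, if_neg hi, one_mul]
      rw [Finset.prod_congr rfl (fun i _ => this i), Finset.prod_mul_distrib,
        Finset.prod_ite_eq' Finset.univ r (fun i => (-1 : ℝ) ^ (b i))]
      simp
    rw [hW, hM]
    have hsgn : (-1 : ℝ) ^ (n - 1 - (r : ℕ)) * (-1 : ℝ) ^ (b r) = -1 := by
      rw [← pow_add]
      apply Odd.neg_one_pow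
      rw [Nat.not_even_iff_odd.symm]
      intro hcon
      exact hr (by rwa [Nat.add_comm] at hcon)
    calc (-1 : ℝ) ^ (n - 1 - (r : ℕ)) * W x * ((-1 : ℝ) ^ (b r) * ∏ i, x i ^ (b i))
        = ((-1 : ℝ) ^ (n - 1 - (r : ℕ)) * (-1 : ℝ) ^ (b r)) * (W x * ∏ i, x i ^ (b i)) := by ring
      _ = -(W x * ∏ i, x i ^ (b i)) := by rw [hsgn]; ring
  have h1 : ∫ x in D, W x * ∏ i, x i ^ (b i)
      = ∫ x in D, W (ρ x) * ∏ i, (ρ x) i ^ (b i) := by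
    have := hmp.setIntegral_preimage_emb hemb (fun x => W x * ∏ i, x i ^ (b i)) D
    rw [hpre] at this
    exact this.symm
  have h2 : ∫ x in D, W (ρ x) * ∏ i, (ρ x) i ^ (b i)
      = - ∫ x in D, W x * ∏ i, x i ^ (b i) := by
    rw [← integral_neg]
    exact setIntegral_congr_fun hDm (fun x hx => hodd x hx)
  linarith [h1, h2]

lemma even_sub_one_iff {m : ℕ} (hm : 0 < m) : Even (m - 1) ↔ Odd m := by
  obtain ⟨k, rfl⟩ : ∃ k, m = k + 1 := ⟨m - 1, by omega⟩
  rw [Nat.add_sub_cancel, Nat.odd_add_one, Nat.not_odd_iff_even]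

lemma key0 (e : Fin n → ℕ) (he : ∀ j, 0 < e j)
    (hN : (Finset.univ.filter (fun j : Fin n => Odd (e j))).card ≠ (n + 1) / 2) :
    ∫ x in Box n ∩ Babs (1 : Equiv.Perm (Fin n)), W x * T e x = 0 := by
  classical
  have hTx : ∀ x : Fin n → ℝ, W x * T e x
      = ∑ π : Equiv.Perm (Fin n),
          ((Equiv.Perm.sign π : ℤ) : ℝ) * (W x * ∏ i, x i ^ (e (π.symm i) - 1)) := by
    intro x
    rw [T, Matrix.det_apply, Finset.mul_sum]
    apply Finset.sum_congr rfl
    intro π _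
    have hprod : (∏ i, (Matrix.of fun i j => x i ^ (e j - 1)) (π i) i)
        = ∏ i, x i ^ (e (π.symm i) - 1) := by
      rw [← Equiv.prod_comp π (fun k => x k ^ (e (π.symm k) - 1))]
      apply Finset.prod_congr rfl
      intro i _
      simp
    rw [hprod, Units.smul_def, zsmul_eq_mul]
    ring
  rw [setIntegral_congr_fun (measurableSet_Box.inter (measurableSet_Babs 1))
    (fun x _ => hTx x)]
  rw [integral_finset_sum]
  · apply Finset.sum_eq_zero
    intro π _
    have hc : (Finset.univ.filter
        (fun i : Fin n => Even (e (π.symm i) - 1))).card ≠ (n + 1) / 2 := by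
      have h1 : (Finset.univ.filter (fun i : Fin n => Even (e (π.symm i) - 1)))
          = (Finset.univ.filter (fun i : Fin n => Odd (e (π.symm i)))) :=
        Finset.filter_congr fun i _ => by
          simp [even_sub_one_iff (he (π.symm i))]
      rw [h1, card_filter_comp (fun j => Odd (e j)) (π.symm : Equiv.Perm (Fin n))]
      exact hN
    rw [integral_const_mul, mono_vanish (fun i => e (π.symm i) - 1) hc, mul_zero]
  · intro π _
    apply Integrable.const_mul
    exact integrableOn_W_mul (fun x => ∏ i, x i ^ (e (π.symm i) - 1))
      (by continuity) Set.inter_subset_left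

lemma step1 (e : Fin n → ℕ) :
    fint n e = ∫ x in Box n ∩ Adec (1 : Equiv.Perm (Fin n)), T e x := by
  classical
  have hmMono : MeasurableSet {x : Fin n → ℝ | ∀ i j : Fin n, i ≤ j → x j ≤ x i} := by
    have : {x : Fin n → ℝ | ∀ i j : Fin n, i ≤ j → x j ≤ x i}
        = ⋂ i : Fin n, ⋂ j : Fin n, ⋂ (_ : i ≤ j), {x : Fin n → ℝ | x j ≤ x i} := by
      ext x; simp
    rw [this]
    exact MeasurableSet.iInter fun i => MeasurableSet.iInter fun j =>
      MeasurableSet.iInter fun _ =>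
        measurableSet_le (measurable_pi_apply _) (measurable_pi_apply _)
  have hΔ : {x : Fin n → ℝ | (∀ i, -1 ≤ x i ∧ x i ≤ 1) ∧ ∀ i j : Fin n, i ≤ j → x j ≤ x i}
      = Box n ∩ {x : Fin n → ℝ | ∀ i j : Fin n, i ≤ j → x j ≤ x i} := rfl
  have hm1 : MeasurableSet {x : Fin n → ℝ |
      (∀ i, -1 ≤ x i ∧ x i ≤ 1) ∧ ∀ i j : Fin n, i ≤ j → x j ≤ x i} := by
    rw [hΔ]; exact measurableSet_Box.inter hmMono
  have hm2 : MeasurableSet (Box n ∩ Adec (1 : Equiv.Perm (Fin n))) :=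
    measurableSet_Box.inter (measurableSet_Adec 1)
  rw [fint]
  rw [← integral_indicator hm1, ← integral_indicator hm2]
  congr 1
  funext x
  by_cases hx : x ∈ Box n ∩ Adec (1 : Equiv.Perm (Fin n))
  · have hxΔ : x ∈ {x : Fin n → ℝ |
        (∀ i, -1 ≤ x i ∧ x i ≤ 1) ∧ ∀ i j : Fin n, i ≤ j → x j ≤ x i} := by
      refine ⟨hx.1, fun i j hij => ?_⟩
      rcases eq_or_lt_of_le hij with h | h
      · rw [h]
      · have := hx.2 i j h
        simp only [Equiv.Perm.coe_one, id_eq] at this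
        exact le_of_lt this
    rw [Set.indicator_of_mem hx, Set.indicator_of_mem hxΔ]
    rfl
  · rw [Set.indicator_of_notMem hx]
    by_cases hx2 : x ∈ {x : Fin n → ℝ |
        (∀ i, -1 ≤ x i ∧ x i ≤ 1) ∧ ∀ i j : Fin n, i ≤ j → x j ≤ x i}
    · rw [Set.indicator_of_mem hx2]
      have hnadec : ¬ (x ∈ Adec (1 : Equiv.Perm (Fin n))) := fun hA => hx ⟨hx2.1, hA⟩
      simp only [Adec, Set.mem_setOf_eq, Equiv.Perm.coe_one, id_eq, not_forall] at hnadec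
      obtain ⟨i, j, hij, hle⟩ := hnadec
      have heq : x i = x j := le_antisymm (not_lt.mp hle) (hx2.2 i j (le_of_lt hij))
      apply Matrix.det_zero_of_row_eq (ne_of_lt hij)
      funext k
      simp only [Matrix.of_apply]
      rw [heq]
    · rw [Set.indicator_of_notMem hx2]

end Stmt6

open Stmt6 in
/-- If the number of odd entries minus the number of even entries of `e` is not `0` or `1`,
then `f_n(e) = 0`. -/
theorem stmt6 (n : ℕ) (e : Fin n → ℕ) (he : ∀ j, 0 < e j)
    (h : (((Finset.univ.filter fun j : Fin n => Odd (e j)).card : ℤ) -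
        ((Finset.univ.filter fun j : Fin n => Even (e j)).card : ℤ)) ∉ ({0, 1} : Set ℤ)) :
    fint n e = 0 := by
  classical
  have hN : (Finset.univ.filter fun j : Fin n => Odd (e j)).card ≠ (n + 1) / 2 := by
    intro hA
    apply h
    have hsum : (Finset.univ.filter fun j : Fin n => Odd (e j)).card
        + (Finset.univ.filter fun j : Fin n => Even (e j)).card = n := by
      rw [show (Finset.univ.filter fun j : Fin n => Even (e j))
          = (Finset.univ.filter fun j : Fin n => ¬ Odd (e j)) from
        Finset.filter_congr fun j _ => by rw [Nat.not_odd_iff_even]]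
      rw [Finset.card_filter_add_card_filter_not]
      simp
    simp only [Set.mem_insert_iff, Set.mem_singleton_iff]
    omega
  have hint : IntegrableOn (fun x => W x * T e x) (Box n) volume :=
    integrableOn_W_mul (T e) (continuous_T e) subset_rfl
  have hP1 : ∫ x in Box n, W x * T e x
      = ∑ σ : Equiv.Perm (Fin n), ∫ x in Box n ∩ Adec σ, W x * T e x := by
    apply partition_integral _ hint Adec measurableSet_Adec
    filter_upwards [ae_inj] with x hx _
    exact exists_unique_sort x hx
  have hP2 : ∫ x in Box n, W x * T e x
      = ∑ τ : Equiv.Perm (Fin n), ∫ x in Box n ∩ Babs τ, W x * T e x := by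
    apply partition_integral _ hint Babs measurableSet_Babs
    filter_upwards [ae_abs_inj] with x hx _
    exact exists_unique_sort (fun i => |x i|) hx
  have hzero : ∫ x in Box n, W x * T e x = 0 := by
    rw [hP2]
    apply Finset.sum_eq_zero
    intro τ _
    rw [region_Babs e τ]
    exact key0 e he hN
  have hval : ∫ x in Box n ∩ Adec (1 : Equiv.Perm (Fin n)), W x * T e x = 0 := by
    have h1 := hP1
    rw [hzero, Finset.sum_congr rfl (fun σ _ => region_Adec e σ), Finset.sum_const,
      nsmul_eq_mul] at h1
    have hcards : (0 : ℝ) < (Finset.univ : Finset (Equiv.Perm (Fin n))).card := by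
      have : 0 < (Finset.univ : Finset (Equiv.Perm (Fin n))).card :=
        Finset.card_pos.mpr ⟨1, Finset.mem_univ 1⟩
      exact_mod_cast this
    rcases mul_eq_zero.mp h1.symm with hc | hv
    · exact absurd hc (ne_of_gt hcards)
    · exact hv
  rw [step1 e]
  rw [show (∫ x in Box n ∩ Adec (1 : Equiv.Perm (Fin n)), T e x)
      = ∫ x in Box n ∩ Adec (1 : Equiv.Perm (Fin n)), W x * T e x from
    setIntegral_congr_fun (measurableSet_Box.inter (measurableSet_Adec 1))
      (fun x hx => by rw [W_one_on_Adec hx.2, one_mul])]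
  exact hval
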